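/- Assume g ∈ L^p(π) for some p > 2, ∫ g dπ = 0, and Condition (C) holds with some α ∈ (0, 1/2). Then for π-almost every x ∈ 𝒳, n^{-1/2} max_{1 ≤ k ≤ n} |T_k(g, Q)(x)| converges to 0 as n → ∞. (Equivalently, since E_x(S_k(g)) = T_k(g,Q)(x), n^{-1/2} max_{k ≤ n} |E_x(S_k(g))| → 0 for π-a.e. x.) -/

import Mathlib

open MeasureTheory ProbabilityTheory Filter
open scoped ENNReal NNReal

noncomputable section

/-- The Markov transition operator: `Qh(x) = ∫ h(y) Q(x; dy)`. -/
def kerOp {𝒳 : Type*} [MeasurableSpace 𝒳] {E : Type*} [NormedAddCommGroup E]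
    [NormedSpace ℝ E] (Q : Kernel 𝒳 𝒳) (h : 𝒳 → E) : 𝒳 → E :=
  fun x => ∫ y, h y ∂(Q x)

/-- `T_n(g, Q) = ∑_{k=0}^{n-1} Q^k g`. -/
def Tres {𝒳 : Type*} [MeasurableSpace 𝒳] {E : Type*} [NormedAddCommGroup E]
    [NormedSpace ℝ E] (Q : Kernel 𝒳 𝒳) (g : 𝒳 → E) (n : ℕ) : 𝒳 → E :=
  fun x => ∑ k ∈ Finset.range n, (kerOp Q)^[k] g x

section Aux

set_option linter.unusedSectionVars false

variable {𝒳 : Type*} [MeasurableSpace 𝒳] {E : Type*} [NormedAddCommGroup E]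
  [NormedSpace ℝ E] [CompleteSpace E] {Q : Kernel 𝒳 𝒳} [IsMarkovKernel Q]
  {π : Measure 𝒳} [IsProbabilityMeasure π]

lemma kerOp_sm {f : 𝒳 → E} (hf : StronglyMeasurable f) :
    StronglyMeasurable (kerOp Q f) :=
  StronglyMeasurable.integral_kernel_prod_right' (κ := Q)
    (hf.comp_measurable measurable_snd)

lemma lintegral_kerOp (hinv : Kernel.Invariant Q π) {f : 𝒳 → ℝ≥0∞} (hf : Measurable f) :
    ∫⁻ x, ∫⁻ y, f y ∂(Q x) ∂π = ∫⁻ x, f x ∂π := by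
  conv_rhs => rw [← hinv.def]
  exact (Measure.lintegral_bind (Kernel.measurable Q).aemeasurable hf.aemeasurable).symm

lemma eLpNorm_kerOp_le (hinv : Kernel.Invariant Q π) {f : 𝒳 → E} (hf : StronglyMeasurable f)
    {q : ℝ≥0∞} (hq1 : 1 ≤ q) (hqt : q ≠ ∞) :
    eLpNorm (kerOp Q f) q π ≤ eLpNorm f q π := by
  have hq0 : q ≠ 0 := by
    intro h; rw [h] at hq1; exact (by norm_num : ¬ (1:ℝ≥0∞) ≤ 0) hq1
  have hqr : 0 < q.toReal := ENNReal.toReal_pos hq0 hqt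
  rw [eLpNorm_eq_lintegral_rpow_enorm_toReal hq0 hqt, eLpNorm_eq_lintegral_rpow_enorm_toReal hq0 hqt]
  refine ENNReal.rpow_le_rpow ?_ (by positivity)
  calc ∫⁻ x, (‖kerOp Q f x‖₊ : ℝ≥0∞) ^ q.toReal ∂π
      ≤ ∫⁻ x, ∫⁻ y, (‖f y‖₊ : ℝ≥0∞) ^ q.toReal ∂(Q x) ∂π := by
        refine lintegral_mono fun x => ?_
        have h1 : (‖kerOp Q f x‖₊ : ℝ≥0∞) ≤ eLpNorm f 1 (Q x) := by
          rw [eLpNorm_one_eq_lintegral_enorm]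
          exact enorm_integral_le_lintegral_enorm _
        have h2 : eLpNorm f 1 (Q x) ≤ eLpNorm f q (Q x) :=
          eLpNorm_le_eLpNorm_of_exponent_le hq1 hf.aestronglyMeasurable
        have h3 := ENNReal.rpow_le_rpow (h1.trans h2) hqr.le
        rwa [eLpNorm_eq_lintegral_rpow_enorm_toReal hq0 hqt, ← ENNReal.rpow_mul,
          one_div_mul_cancel hqr.ne', ENNReal.rpow_one] at h3
    _ = ∫⁻ y, (‖f y‖₊ : ℝ≥0∞) ^ q.toReal ∂π :=
        lintegral_kerOp hinv (hf.enorm.pow_const _)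

lemma kerOp_congr_ae (hinv : Kernel.Invariant Q π) {f g : 𝒳 → E}
    (hf : StronglyMeasurable f) (hg : StronglyMeasurable g) (h : f =ᵐ[π] g) :
    kerOp Q f =ᵐ[π] kerOp Q g := by
  have hsm : MeasurableSet {x | f x = g x} := hf.measurableSet_eq_fun hg
  have h0 : π {x | f x = g x}ᶜ = 0 := by
    have := ae_iff.1 h
    simpa [Set.compl_setOf] using this
  have hint : ∫⁻ x, Q x ({x | f x = g x}ᶜ) ∂π = 0 := by
    rw [← Measure.bind_apply hsm.compl (Kernel.measurable Q).aemeasurable, hinv.def, h0]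
  have hae := (lintegral_eq_zero_iff (Kernel.measurable_coe Q hsm.compl)).1 hint
  filter_upwards [hae] with x hx
  refine integral_congr_ae (ae_iff.2 ?_)
  simpa [Set.compl_setOf] using hx

lemma ae_integrable_kerOp (hinv : Kernel.Invariant Q π) {f : 𝒳 → E}
    (hf : StronglyMeasurable f) (hfi : Integrable f π) :
    ∀ᵐ x ∂π, Integrable f (Q x) := by
  have hm : Measurable fun x => ∫⁻ y, (‖f y‖₊ : ℝ≥0∞) ∂(Q x) :=
    Measurable.lintegral_kernel hf.enorm
  have hne : ∫⁻ x, ∫⁻ y, (‖f y‖₊ : ℝ≥0∞) ∂(Q x) ∂π ≠ ∞ := by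
    exact (lintegral_kerOp hinv hf.enorm).trans_ne hfi.2.ne
  filter_upwards [ae_lt_top hm hne] with x hx
  exact ⟨hf.aestronglyMeasurable, hx⟩

lemma kerOp_finset_sum_ae (hinv : Kernel.Invariant Q π) {ι : Type*} (s : Finset ι)
    (f : ι → 𝒳 → E) (hf : ∀ i ∈ s, StronglyMeasurable (f i))
    (hfi : ∀ i ∈ s, Integrable (f i) π) :
    kerOp Q (fun x => ∑ i ∈ s, f i x) =ᵐ[π] fun x => ∑ i ∈ s, kerOp Q (f i) x := by
  have h : ∀ᵐ x ∂π, ∀ i ∈ s, Integrable (f i) (Q x) :=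
    (ae_ball_iff s.countable_toSet).2 fun i hi => ae_integrable_kerOp hinv (hf i hi) (hfi i hi)
  filter_upwards [h] with x hx
  simpa [kerOp] using integral_finset_sum s hx

lemma iter_sm {f : 𝒳 → E} (hf : StronglyMeasurable f) (k : ℕ) :
    StronglyMeasurable ((kerOp Q)^[k] f) := by
  induction k with
  | zero => exact hf
  | succ n ih => rw [Function.iterate_succ_apply']; exact kerOp_sm ih

lemma eLpNorm_iter_le (hinv : Kernel.Invariant Q π) {f : 𝒳 → E} (hf : StronglyMeasurable f)
    {q : ℝ≥0∞} (hq1 : 1 ≤ q) (hqt : q ≠ ∞) (k : ℕ) :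
    eLpNorm ((kerOp Q)^[k] f) q π ≤ eLpNorm f q π := by
  induction k with
  | zero => exact le_rfl
  | succ n ih =>
    rw [Function.iterate_succ_apply']
    exact (eLpNorm_kerOp_le hinv (iter_sm hf n) hq1 hqt).trans ih

lemma integrable_iter (hinv : Kernel.Invariant Q π) {f : 𝒳 → E} (hf : StronglyMeasurable f)
    (hfi : Integrable f π) (k : ℕ) : Integrable ((kerOp Q)^[k] f) π := by
  refine memLp_one_iff_integrable.1 ⟨(iter_sm hf k).aestronglyMeasurable, ?_⟩
  exact lt_of_le_of_lt (eLpNorm_iter_le hinv hf le_rfl ENNReal.one_ne_top k)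
    (memLp_one_iff_integrable.2 hfi).2

lemma iter_congr_ae (hinv : Kernel.Invariant Q π) {f g : 𝒳 → E}
    (hf : StronglyMeasurable f) (hg : StronglyMeasurable g) (h : f =ᵐ[π] g) (a : ℕ) :
    (kerOp Q)^[a] f =ᵐ[π] (kerOp Q)^[a] g := by
  induction a with
  | zero => exact h
  | succ n ih =>
    rw [Function.iterate_succ_apply', Function.iterate_succ_apply']
    exact kerOp_congr_ae hinv (iter_sm hf n) (iter_sm hg n) ih

lemma sum_sm {g : 𝒳 → E} (hg : StronglyMeasurable g) (b j : ℕ) :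
    StronglyMeasurable (fun x => ∑ k ∈ Finset.range b, (kerOp Q)^[j + k] g x) := by
  apply Finset.stronglyMeasurable_fun_sum
  exact fun k _ => iter_sm hg (j + k)

lemma iter_shift (hinv : Kernel.Invariant Q π) {g : 𝒳 → E} (hg : StronglyMeasurable g)
    (hgi : Integrable g π) :
    ∀ (a b j : ℕ), (kerOp Q)^[a] (fun x => ∑ k ∈ Finset.range b, (kerOp Q)^[j + k] g x)
      =ᵐ[π] fun x => ∑ k ∈ Finset.range b, (kerOp Q)^[j + k + a] g x := by
  intro a
  induction a with
  | zero => intro b j; simp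
  | succ n ih =>
    intro b j
    have h1 : kerOp Q (fun x => ∑ k ∈ Finset.range b, (kerOp Q)^[j + k] g x)
        =ᵐ[π] fun x => ∑ k ∈ Finset.range b, (kerOp Q)^[(j + 1) + k] g x := by
      refine (kerOp_finset_sum_ae hinv (Finset.range b) (fun k => (kerOp Q)^[j + k] g)
        (fun k _ => iter_sm hg _) (fun k _ => integrable_iter hinv hg hgi _)).trans
        (Filter.EventuallyEq.of_eq ?_)
      funext x
      refine Finset.sum_congr rfl fun k _ => ?_
      rw [← Function.iterate_succ_apply' (kerOp Q) (j + k) g]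
      simp only [Nat.succ_eq_add_one, show j + k + 1 = (j + 1) + k from by omega]
    calc (kerOp Q)^[n + 1] (fun x => ∑ k ∈ Finset.range b, (kerOp Q)^[j + k] g x)
        = (kerOp Q)^[n] (kerOp Q (fun x => ∑ k ∈ Finset.range b, (kerOp Q)^[j + k] g x)) := by
          rw [Function.iterate_succ_apply]
      _ =ᵐ[π] (kerOp Q)^[n] (fun x => ∑ k ∈ Finset.range b, (kerOp Q)^[(j + 1) + k] g x) :=
          iter_congr_ae hinv (kerOp_sm (sum_sm hg b j)) (sum_sm hg b (j + 1)) h1 n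
      _ =ᵐ[π] fun x => ∑ k ∈ Finset.range b, (kerOp Q)^[(j + 1) + k + n] g x := ih b (j + 1)
      _ = fun x => ∑ k ∈ Finset.range b, (kerOp Q)^[j + k + (n + 1)] g x := by
          funext x
          refine Finset.sum_congr rfl fun k _ => ?_
          rw [show (j + 1) + k + n = j + k + (n + 1) from by omega]

lemma eLpNorm_block_le (hinv : Kernel.Invariant Q π) {g : 𝒳 → E} (hg : StronglyMeasurable g)
    (hgi : Integrable g π) {q : ℝ≥0∞} (hq1 : 1 ≤ q) (hqt : q ≠ ∞) (a len : ℕ) :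
    eLpNorm (fun x => ∑ k ∈ Finset.range len, (kerOp Q)^[a + k] g x) q π
      ≤ eLpNorm (Tres Q g len) q π := by
  have h := iter_shift hinv hg hgi a len 0
  simp only [zero_add] at h
  have h2 : (fun x => ∑ k ∈ Finset.range len, (kerOp Q)^[a + k] g x)
      =ᵐ[π] (kerOp Q)^[a] (Tres Q g len) := by
    refine EventuallyEq.trans (EventuallyEq.of_eq ?_) h.symm
    funext x
    exact Finset.sum_congr rfl fun k _ => by rw [Nat.add_comm]
  rw [eLpNorm_congr_ae h2]
  exact eLpNorm_iter_le hinv (by show StronglyMeasurable (fun x => ∑ k ∈ Finset.range len, (kerOp Q)^[k] g x); simpa using sum_sm (Q := Q) hg len 0) hq1 hqt a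

lemma cheb_ofReal {f : 𝒳 → E} (hf : AEStronglyMeasurable f π) {q : ℝ≥0∞}
    (hq0 : q ≠ 0) (hqt : q ≠ ∞) {t B : ℝ} (ht : 0 < t) (hB : 0 ≤ B)
    (hfB : eLpNorm f q π ≤ ENNReal.ofReal B) :
    π {x | ENNReal.ofReal t ≤ (‖f x‖₊ : ℝ≥0∞)} ≤ ENNReal.ofReal ((B / t) ^ q.toReal) := by
  have h := meas_ge_le_mul_pow_eLpNorm_enorm (μ := π) hq0 hqt hf
    (ε := ENNReal.ofReal t) (ne_of_gt (ENNReal.ofReal_pos.2 ht)) (fun h => absurd h ENNReal.ofReal_ne_top)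
  refine h.trans ?_
  calc (ENNReal.ofReal t)⁻¹ ^ q.toReal * eLpNorm f q π ^ q.toReal
      ≤ (ENNReal.ofReal t)⁻¹ ^ q.toReal * (ENNReal.ofReal B) ^ q.toReal := by gcongr
    _ = ENNReal.ofReal ((B / t) ^ q.toReal) := by
        rw [← ENNReal.ofReal_inv_of_pos ht,
          ENNReal.ofReal_rpow_of_nonneg (by positivity) ENNReal.toReal_nonneg,
          ENNReal.ofReal_rpow_of_nonneg hB ENNReal.toReal_nonneg,
          ← ENNReal.ofReal_mul (by positivity),
          ← Real.mul_rpow (by positivity) hB]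
        congr 2
        rw [div_eq_mul_inv, mul_comm]

end Aux


lemma expLp {p a s M L : ℝ} (hp : 2 < p) (ha0 : 0 < a) (ha : a < 1/2)
    (hs0 : 0 < s) (hsp : s * p = p / 2 - 1)
    (hL0 : 0 ≤ L) (hLM : L ≤ M) (hcase : L ≤ s / 2 * M) :
    (M - L) + p * (L + (s * (1 - 2*a) / 8) * (M - L) - M / 2)
      ≤ -(s * (1 - 2*a) / 8) * M := by
  have hM0 : 0 ≤ M := le_trans hL0 hLM
  have hu0 : 0 < 1 - 2*a := by linarith
  have hu1 : 1 - 2*a ≤ 1 := by linarith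
  have hps : 0 < p/2 - 1 := by linarith
  set η : ℝ := s * (1 - 2*a) / 8 with hηdef
  have hη0 : 0 ≤ η := by positivity
  have hη8 : η ≤ s/8 := by rw [hηdef]; nlinarith
  have hpηeq : p * η = (p/2 - 1) * (1 - 2*a) / 8 := by
    rw [hηdef]; linear_combination ((1 - 2*a)/8) * hsp
  have hpη : p * η ≤ (p/2 - 1)/8 := by rw [hpηeq]; nlinarith
  have hpηL : 0 ≤ p * η * L := by positivity
  have step2 : L * (p - 1) ≤ (s/2 * M) * (p - 1) :=
    mul_le_mul_of_nonneg_right hcase (by linarith)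
  have step3 : (s/2 * M) * (p - 1) = (M * (p/2 - 1) - M * s)/2 := by
    linear_combination (M/2) * hsp
  have hpηM : p * η * M ≤ (p/2 - 1)/8 * M := mul_le_mul_of_nonneg_right hpη hM0
  have hηM : η * M ≤ s/8 * M := mul_le_mul_of_nonneg_right hη8 hM0
  have h2p : 0 ≤ M * (p - 2) := mul_nonneg hM0 (by linarith)
  have hMs : 0 ≤ M * s := mul_nonneg hM0 hs0.le
  nlinarith [step2, step3, hpηM, hηM, hpηL, h2p, hMs]

lemma expL2 {a s M L : ℝ} (ha0 : 0 < a) (ha : a < 1/2) (hs0 : 0 < s)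
    (hL0 : 0 ≤ L) (hLM : L ≤ M) (hcase : s / 2 * M ≤ L) :
    (M - L) + 2 * (a * L + (s * (1 - 2*a) / 8) * (M - L) - M / 2)
      ≤ -(s * (1 - 2*a) / 8) * M := by
  have hM0 : 0 ≤ M := le_trans hL0 hLM
  have hu0 : 0 < 1 - 2*a := by linarith
  nlinarith [mul_le_mul_of_nonneg_right hcase hu0.le,
    mul_nonneg (mul_nonneg hs0.le hu0.le) hL0,
    mul_nonneg (mul_nonneg hs0.le hu0.le) hM0]

lemma ratio_eq {G ε x y z : ℝ} (hG : 0 < G) (hε : 0 < ε) :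
    ((2:ℝ)^x * G) / (ε * (2:ℝ)^y * (2:ℝ)^z) = (G/ε) * (2:ℝ)^(x - y - z) := by
  have h2 : (0:ℝ) < 2 := by norm_num
  rw [show x - y - z = x + (-y) + (-z) by ring, Real.rpow_add h2, Real.rpow_add h2,
    Real.rpow_neg h2.le, Real.rpow_neg h2.le]
  field_simp

lemma collect {G ε w v : ℝ} (hG : 0 < G) (hε : 0 < ε) (q : ℝ) (hq : 0 < q) :
    (2:ℝ)^w * ((G/ε) * (2:ℝ)^v)^q = (G/ε)^q * (2:ℝ)^(w + q*v) := by
  have h2 : (0:ℝ) < 2 := by norm_num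
  rw [Real.mul_rpow (by positivity) (by positivity), ← Real.rpow_mul h2.le,
    mul_comm ((G/ε)^q) _, ← mul_assoc, ← Real.rpow_add h2]
  rw [mul_comm]
  congr 1
  ring

example : True := trivial

lemma boundLp {p a s ε G C₀ : ℝ} {m l : ℕ} (hp : 2 < p) (ha0 : 0 < a) (ha : a < 1/2)
    (hs0 : 0 < s) (hsp : s * p = p / 2 - 1) (hε : 0 < ε) (hG : 0 < G) (hC₀ : 0 < C₀)
    (hlm : l ≤ m) (hcase : (l:ℝ) ≤ s / 2 * m) :
    ((2^(m-l) : ℕ) : ℝ) *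
      ((((2^l : ℕ):ℝ) * G) / (ε * ((2:ℝ)^(-(s * (1 - 2*a) / 8)))^(m-l) * (2:ℝ)^((m:ℝ)/2)))^p
      ≤ ((G/ε)^p + (C₀/ε)^(2:ℝ)) * ((2:ℝ)^(-(s * (1 - 2*a) / 8)))^m := by
  have h2 : (0:ℝ) < 2 := by norm_num
  set η : ℝ := s * (1 - 2*a) / 8 with hηdef
  set M : ℝ := (m:ℝ) with hM
  set L : ℝ := (l:ℝ) with hL
  have hML : L ≤ M := Nat.cast_le.2 hlm
  have hL0 : (0:ℝ) ≤ L := Nat.cast_nonneg l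
  have e1 : ((2^(m-l) : ℕ) : ℝ) = (2:ℝ)^(M - L) := by
    push_cast
    rw [← Real.rpow_natCast (2:ℝ) (m-l), Nat.cast_sub hlm]
  have e2 : ((2^l : ℕ) : ℝ) = (2:ℝ)^L := by
    push_cast
    rw [← Real.rpow_natCast (2:ℝ) l]
  have e3 : ((2:ℝ)^(-η))^(m-l) = (2:ℝ)^(-η*(M-L)) := by
    rw [← Real.rpow_natCast ((2:ℝ)^(-η)) (m-l), ← Real.rpow_mul h2.le, Nat.cast_sub hlm]
  have e4 : ((2:ℝ)^(-η))^m = (2:ℝ)^(-η*M) := by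
    rw [← Real.rpow_natCast ((2:ℝ)^(-η)) m, ← Real.rpow_mul h2.le]
  rw [e1, e2, e3, e4, ratio_eq hG hε, collect hG hε p (by linarith)]
  have hexp := expLp hp ha0 ha hs0 hsp hL0 hML hcase
  refine mul_le_mul (le_add_of_nonneg_right (by positivity)) ?_ (by positivity) (by positivity)
  apply Real.rpow_le_rpow_of_exponent_le (by norm_num)
  rw [hηdef] at *
  linarith [hexp]

lemma boundL2 {p a s ε G C₀ : ℝ} {m l : ℕ} (ha0 : 0 < a) (ha : a < 1/2)
    (hs0 : 0 < s) (hε : 0 < ε) (hG : 0 < G) (hC₀ : 0 < C₀)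
    (hlm : l ≤ m) (hcase : s / 2 * m ≤ (l:ℝ)) :
    ((2^(m-l) : ℕ) : ℝ) *
      ((C₀ * ((2^l : ℕ):ℝ)^a) / (ε * ((2:ℝ)^(-(s * (1 - 2*a) / 8)))^(m-l) * (2:ℝ)^((m:ℝ)/2)))^(2:ℝ)
      ≤ ((G/ε)^p + (C₀/ε)^(2:ℝ)) * ((2:ℝ)^(-(s * (1 - 2*a) / 8)))^m := by
  have h2 : (0:ℝ) < 2 := by norm_num
  set η : ℝ := s * (1 - 2*a) / 8 with hηdef
  set M : ℝ := (m:ℝ) with hM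
  set L : ℝ := (l:ℝ) with hL
  have hML : L ≤ M := Nat.cast_le.2 hlm
  have hL0 : (0:ℝ) ≤ L := Nat.cast_nonneg l
  have e1 : ((2^(m-l) : ℕ) : ℝ) = (2:ℝ)^(M - L) := by
    push_cast
    rw [← Real.rpow_natCast (2:ℝ) (m-l), Nat.cast_sub hlm]
  have e2 : ((2^l : ℕ) : ℝ)^a = (2:ℝ)^(L*a) := by
    push_cast
    rw [← Real.rpow_natCast (2:ℝ) l, ← Real.rpow_mul h2.le]
  have e3 : ((2:ℝ)^(-η))^(m-l) = (2:ℝ)^(-η*(M-L)) := by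
    rw [← Real.rpow_natCast ((2:ℝ)^(-η)) (m-l), ← Real.rpow_mul h2.le, Nat.cast_sub hlm]
  have e4 : ((2:ℝ)^(-η))^m = (2:ℝ)^(-η*M) := by
    rw [← Real.rpow_natCast ((2:ℝ)^(-η)) m, ← Real.rpow_mul h2.le]
  have hcomm : C₀ * ((2^l : ℕ):ℝ)^a = ((2^l : ℕ):ℝ)^a * C₀ := mul_comm _ _
  rw [hcomm, e1, e2, e3, e4, ratio_eq hC₀ hε, collect hC₀ hε 2 h2]
  have hexp := expL2 ha0 ha hs0 hL0 hML hcase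
  refine mul_le_mul (le_add_of_nonneg_left (by positivity : (0:ℝ) ≤ (G/ε)^p)) ?_ (by positivity) (by positivity)
  apply Real.rpow_le_rpow_of_exponent_le (by norm_num)
  rw [hηdef] at *
  linarith [hexp]

section Master

set_option linter.unusedSectionVars false
set_option maxHeartbeats 1000000

variable {𝒳 : Type*} [MeasurableSpace 𝒳] {E : Type*} [NormedAddCommGroup E]
  [NormedSpace ℝ E] [CompleteSpace E] {Q : Kernel 𝒳 𝒳} [IsMarkovKernel Q]
  {π : Measure 𝒳} [IsProbabilityMeasure π]

lemma master (hinv : Kernel.Invariant Q π)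
    {g : 𝒳 → E} (hgm : StronglyMeasurable g) {p α C : ℝ} (hp : 2 < p) (hα0 : 0 < α)
    (hα : α < 1 / 2) (hg : MemLp g (ENNReal.ofReal p) π)
    (hC : ∀ n : ℕ, 1 ≤ n →
      eLpNorm (Tres Q g n) 2 π ≤ ENNReal.ofReal (C * (n : ℝ) ^ α))
    {ε : ℝ} (hε : 0 < ε) :
    ∀ᵐ x ∂π, ∀ᶠ m : ℕ in atTop, ∀ k ≤ 2^m,
      ‖Tres Q g k x‖ ≤ ε * (1 - (2:ℝ)^(-((1/2 - 1/p) * (1 - 2*α) / 8)))⁻¹ *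
        (2:ℝ)^((m:ℝ)/2) := by
  classical
  have h2 : (0:ℝ) < 2 := by norm_num
  set s : ℝ := 1/2 - 1/p with hsdef
  have hp0 : 0 < p := by linarith
  have hs0 : 0 < s := by
    have h1p : 1/p < 1/2 := by
      rw [div_lt_div_iff₀ hp0 h2]; linarith
    rw [hsdef]; linarith
  have hsp : s * p = p / 2 - 1 := by rw [hsdef]; field_simp
  set η : ℝ := s * (1 - 2*α) / 8 with hηdef
  have hu0 : (0:ℝ) < 1 - 2*α := by linarith
  have hη0 : 0 < η := by rw [hηdef]; positivity
  set ρ : ℝ := (2:ℝ)^(-η) with hρdef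
  have hρ0 : 0 < ρ := Real.rpow_pos_of_pos h2 _
  have hρ1 : ρ < 1 := by
    rw [hρdef]
    exact Real.rpow_lt_one_of_one_lt_of_neg one_lt_two (by linarith)
  set pp : ℝ≥0∞ := ENNReal.ofReal p with hppdef
  have hpp0 : pp ≠ 0 := by
    rw [hppdef]; simp only [ne_eq, ENNReal.ofReal_eq_zero, not_le]; linarith
  have hppt : pp ≠ ∞ := by rw [hppdef]; exact ENNReal.ofReal_ne_top
  have hpp1 : 1 ≤ pp := by rw [hppdef]; exact ENNReal.one_le_ofReal.2 (by linarith)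
  have hpptr : pp.toReal = p := by rw [hppdef]; exact ENNReal.toReal_ofReal hp0.le
  have hgi : Integrable g π := memLp_one_iff_integrable.1 (hg.mono_exponent hpp1)
  set G : ℝ := max (eLpNorm g pp π).toReal 1 with hGdef
  have hG0 : 0 < G := lt_of_lt_of_le one_pos (le_max_right _ _)
  have hGle : eLpNorm g pp π ≤ ENNReal.ofReal G := by
    rw [← ENNReal.ofReal_toReal hg.2.ne]
    exact ENNReal.ofReal_le_ofReal (le_max_left _ _)
  set C₀ : ℝ := max C 1 with hC₀def
  have hC₀0 : 0 < C₀ := lt_of_lt_of_le one_pos (le_max_right _ _)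
  set Df : ℕ → ℕ → 𝒳 → E :=
    fun l j x => ∑ k ∈ Finset.range (2^l), (kerOp Q)^[j * 2^l + k] g x with hDdef
  have hDsm : ∀ l j, StronglyMeasurable (Df l j) := fun l j =>
    Finset.stronglyMeasurable_fun_sum _ fun k _ => iter_sm hgm _
  set thr : ℕ → ℕ → ℝ := fun m l => ε * ρ^(m-l) * (2:ℝ)^((m:ℝ)/2) with hthrdef
  have hthr0 : ∀ m l, 0 < thr m l := fun m l => by
    rw [hthrdef]; positivity
  set A : ℕ → Set 𝒳 := fun m => ⋃ l ∈ Finset.range (m+1), ⋃ j ∈ Finset.range (2^(m-l)),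
      {x | ENNReal.ofReal (thr m l) ≤ (‖Df l j x‖₊ : ℝ≥0∞)} with hAdef
  set A₀ : ℝ := (G/ε)^p + (C₀/ε)^(2:ℝ) with hA₀def
  have hA₀0 : 0 ≤ A₀ := by rw [hA₀def]; positivity
  -- eLpNorm bounds on blocks
  have hDp : ∀ l j, eLpNorm (Df l j) pp π ≤ ENNReal.ofReal (((2^l : ℕ):ℝ) * G) := by
    intro l j
    have heq : Df l j = ∑ k ∈ Finset.range (2^l), (kerOp Q)^[j * 2^l + k] g := by
      funext x; rw [hDdef]; simp [Finset.sum_apply]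
    rw [heq]
    refine (eLpNorm_sum_le (fun k _ => (iter_sm hgm _).aestronglyMeasurable) hpp1).trans ?_
    calc ∑ k ∈ Finset.range (2^l), eLpNorm ((kerOp Q)^[j * 2^l + k] g) pp π
        ≤ ∑ _k ∈ Finset.range (2^l), ENNReal.ofReal G :=
          Finset.sum_le_sum fun k _ => (eLpNorm_iter_le hinv hgm hpp1 hppt _).trans hGle
      _ = (2^l : ℕ) * ENNReal.ofReal G := by
          rw [Finset.sum_const, Finset.card_range, nsmul_eq_mul]
      _ = ENNReal.ofReal (((2^l : ℕ):ℝ) * G) := by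
          rw [ENNReal.ofReal_mul (by positivity), ENNReal.ofReal_natCast]
  have hD2 : ∀ l j, eLpNorm (Df l j) 2 π ≤ ENNReal.ofReal (C₀ * ((2^l : ℕ):ℝ)^α) := by
    intro l j
    have hb := eLpNorm_block_le hinv hgm hgi (q := 2) one_le_two ENNReal.ofNat_ne_top
      (j * 2^l) (2^l)
    refine hb.trans ((hC (2^l) Nat.one_le_two_pow).trans (ENNReal.ofReal_le_ofReal ?_))
    have hx0 : (0:ℝ) ≤ ((2^l : ℕ):ℝ)^α := by positivity
    have : C ≤ C₀ := le_max_left C 1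
    nlinarith
  -- measure bounds
  have hbound : ∀ m, π (A m) ≤ ENNReal.ofReal (((m:ℝ)+1) * (A₀ * ρ^m)) := by
    intro m
    have inner : ∀ l ∈ Finset.range (m+1),
        π (⋃ j ∈ Finset.range (2^(m-l)),
            {x | ENNReal.ofReal (thr m l) ≤ (‖Df l j x‖₊ : ℝ≥0∞)})
          ≤ ENNReal.ofReal (A₀ * ρ^m) := by
      intro l hl
      have hlm : l ≤ m := by have := Finset.mem_range.1 hl; omega
      by_cases hcase : (l:ℝ) ≤ s/2 * m
      · have hone : ∀ j ∈ Finset.range (2^(m-l)),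
            π {x | ENNReal.ofReal (thr m l) ≤ (‖Df l j x‖₊ : ℝ≥0∞)}
              ≤ ENNReal.ofReal ((((2^l:ℕ):ℝ) * G / thr m l) ^ p) := by
          intro j _
          have hch := cheb_ofReal (π := π) (hDsm l j).aestronglyMeasurable hpp0 hppt
            (hthr0 m l) (by positivity) (hDp l j)
          rwa [hpptr] at hch
        calc π (⋃ j ∈ Finset.range (2^(m-l)),
                {x | ENNReal.ofReal (thr m l) ≤ (‖Df l j x‖₊ : ℝ≥0∞)})
            ≤ ∑ j ∈ Finset.range (2^(m-l)),
                π {x | ENNReal.ofReal (thr m l) ≤ (‖Df l j x‖₊ : ℝ≥0∞)} :=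
              measure_biUnion_finset_le _ _
          _ ≤ ∑ _j ∈ Finset.range (2^(m-l)),
                ENNReal.ofReal ((((2^l:ℕ):ℝ) * G / thr m l) ^ p) :=
              Finset.sum_le_sum hone
          _ = (2^(m-l) : ℕ) * ENNReal.ofReal ((((2^l:ℕ):ℝ) * G / thr m l) ^ p) := by
              rw [Finset.sum_const, Finset.card_range, nsmul_eq_mul]
          _ = ENNReal.ofReal (((2^(m-l):ℕ):ℝ) * ((((2^l:ℕ):ℝ) * G / thr m l) ^ p)) := by
              rw [ENNReal.ofReal_mul (by positivity), ENNReal.ofReal_natCast]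
          _ ≤ ENNReal.ofReal (A₀ * ρ^m) := by
              refine ENNReal.ofReal_le_ofReal ?_
              rw [hthrdef, hA₀def, hρdef, hηdef]
              exact boundLp hp hα0 hα hs0 hsp hε hG0 hC₀0 hlm hcase
      · push_neg at hcase
        have hone : ∀ j ∈ Finset.range (2^(m-l)),
            π {x | ENNReal.ofReal (thr m l) ≤ (‖Df l j x‖₊ : ℝ≥0∞)}
              ≤ ENNReal.ofReal ((C₀ * ((2^l:ℕ):ℝ)^α / thr m l) ^ (2:ℝ)) := by
          intro j _
          have hch := cheb_ofReal (π := π) (hDsm l j).aestronglyMeasurable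
            (two_ne_zero) ENNReal.ofNat_ne_top (hthr0 m l) (by positivity) (hD2 l j)
          rwa [show (2:ℝ≥0∞).toReal = (2:ℝ) by simp] at hch
        calc π (⋃ j ∈ Finset.range (2^(m-l)),
                {x | ENNReal.ofReal (thr m l) ≤ (‖Df l j x‖₊ : ℝ≥0∞)})
            ≤ ∑ j ∈ Finset.range (2^(m-l)),
                π {x | ENNReal.ofReal (thr m l) ≤ (‖Df l j x‖₊ : ℝ≥0∞)} :=
              measure_biUnion_finset_le _ _
          _ ≤ ∑ _j ∈ Finset.range (2^(m-l)),
                ENNReal.ofReal ((C₀ * ((2^l:ℕ):ℝ)^α / thr m l) ^ (2:ℝ)) :=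
              Finset.sum_le_sum hone
          _ = (2^(m-l) : ℕ) * ENNReal.ofReal ((C₀ * ((2^l:ℕ):ℝ)^α / thr m l) ^ (2:ℝ)) := by
              rw [Finset.sum_const, Finset.card_range, nsmul_eq_mul]
          _ = ENNReal.ofReal (((2^(m-l):ℕ):ℝ) * ((C₀ * ((2^l:ℕ):ℝ)^α / thr m l) ^ (2:ℝ))) := by
              rw [ENNReal.ofReal_mul (by positivity), ENNReal.ofReal_natCast]
          _ ≤ ENNReal.ofReal (A₀ * ρ^m) := by
              refine ENNReal.ofReal_le_ofReal ?_
              rw [hthrdef, hA₀def, hρdef, hηdef]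
              exact boundL2 hα0 hα hs0 hε hG0 hC₀0 hlm hcase.le
    calc π (A m) ≤ ∑ l ∈ Finset.range (m+1),
          π (⋃ j ∈ Finset.range (2^(m-l)),
            {x | ENNReal.ofReal (thr m l) ≤ (‖Df l j x‖₊ : ℝ≥0∞)}) := by
          rw [hAdef]; exact measure_biUnion_finset_le _ _
      _ ≤ ∑ _l ∈ Finset.range (m+1), ENNReal.ofReal (A₀ * ρ^m) := Finset.sum_le_sum inner
      _ = ((m+1 : ℕ) : ℝ≥0∞) * ENNReal.ofReal (A₀ * ρ^m) := by
          rw [Finset.sum_const, Finset.card_range, nsmul_eq_mul]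
      _ = ENNReal.ofReal (((m:ℝ)+1) * (A₀ * ρ^m)) := by
          rw [show ((m:ℝ)+1) = ((m+1:ℕ):ℝ) from by push_cast; ring,
            ENNReal.ofReal_mul (p := ((m+1:ℕ):ℝ)) (by positivity), ENNReal.ofReal_natCast]
  have hsummable : Summable (fun m : ℕ => ((m:ℝ)+1) * (A₀ * ρ^m)) := by
    have h1 : Summable (fun m : ℕ => (m:ℝ)^(1:ℕ) * ρ^m) :=
      summable_pow_mul_geometric_of_norm_lt_one 1
        (by rw [Real.norm_eq_abs, abs_of_pos hρ0]; exact hρ1)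
    have h2' : Summable (fun m : ℕ => ρ^m) := summable_geometric_of_lt_one hρ0.le hρ1
    refine ((h1.add h2').mul_left A₀).congr fun m => ?_
    simp only [pow_one]
    ring
  have hsum : (∑' m, π (A m)) ≠ ∞ := by
    refine ne_top_of_le_ne_top ?_ (ENNReal.tsum_le_tsum hbound)
    rw [← ENNReal.ofReal_tsum_of_nonneg
      (fun m => mul_nonneg (by positivity) (mul_nonneg hA₀0 (by positivity))) hsummable]
    exact ENNReal.ofReal_ne_top
  filter_upwards [MeasureTheory.ae_eventually_notMem hsum] with x hxae
  refine hxae.mono fun m hm => ?_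
  -- deterministic chaining
  have hblk : ∀ l j, l ≤ m → j < 2^(m-l) → ‖Df l j x‖ < thr m l := by
    intro l j hl hj
    by_contra hcon
    push_neg at hcon
    refine hm ?_
    rw [hAdef]
    refine Set.mem_iUnion₂.2 ⟨l, Finset.mem_range.2 (by omega), ?_⟩
    refine Set.mem_iUnion₂.2 ⟨j, Finset.mem_range.2 hj, ?_⟩
    simp only [Set.mem_setOf_eq]
    show ENNReal.ofReal (thr m l) ≤ ‖Df l j x‖ₑ; rw [← ofReal_norm]
    exact ENNReal.ofReal_le_ofReal hcon
  have chain : ∀ k, ∀ l₀, 2^l₀ ∣ k → k ≤ 2^m →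
      ‖Tres Q g k x‖ ≤ ∑ i ∈ Finset.Ico l₀ (m+1), thr m i := by
    intro k
    induction k using Nat.strong_induction_on with
    | _ k ih =>
      intro l₀ hdvd hk
      rcases Nat.eq_zero_or_pos k with rfl | hkpos
      · have : Tres Q g 0 x = 0 := by simp [Tres]
        rw [this, norm_zero]
        exact Finset.sum_nonneg fun i _ => (hthr0 m i).le
      obtain ⟨t, q, hq_odd, rfl⟩ := Nat.exists_eq_two_pow_mul_odd hkpos.ne'
      obtain ⟨u, rfl⟩ : ∃ u, q = u + 1 := ⟨q - 1, by rcases hq_odd with ⟨v, hv⟩; omega⟩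
      have hq1 : 1 ≤ u + 1 := by omega
      have hl₀t : l₀ ≤ t := by
        by_contra hlt
        push_neg at hlt
        have hd : 2^(t+1) ∣ 2^t * (u+1) := dvd_trans (pow_dvd_pow 2 (by omega)) hdvd
        rw [pow_succ] at hd
        have h2d : (2:ℕ) ∣ (u+1) :=
          (Nat.mul_dvd_mul_iff_left (Nat.pow_pos (by omega : 0 < 2) (n := t))).1 hd
        obtain ⟨v, hv⟩ := hq_odd
        omega
      have h0t : 0 < 2^t := Nat.pow_pos (by omega : 0 < 2)
      have htm : t ≤ m := by
        have h1 : 2^t ≤ 2^m := by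
          calc 2^t = 2^t * 1 := by ring
            _ ≤ 2^t*(u+1) := Nat.mul_le_mul_left _ (by omega)
            _ ≤ 2^m := hk
        exact (Nat.pow_le_pow_iff_right (by omega)).1 h1
      have hule : u + 1 ≤ 2^(m-t) := by
        have hmul : 2^t * (u+1) ≤ 2^t * 2^(m-t) := by
          rw [← pow_add, Nat.add_sub_cancel' htm]; exact hk
        exact Nat.le_of_mul_le_mul_left hmul h0t
      have hjlt : u < 2^(m-t) := Nat.lt_of_lt_of_le (Nat.lt_succ_self u) hule
      have hsplit : Tres Q g (2^t * (u+1)) x = Tres Q g (2^t * u) x + Df t u x := by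
        have h1 : 2^t * (u+1) = 2^t*u + 2^t := by ring
        rw [h1]
        show (∑ i ∈ Finset.range (2^t*u + 2^t), (kerOp Q)^[i] g x) = _
        rw [← Finset.sum_range_add_sum_Ico _ (Nat.le_add_right (2^t*u) (2^t))]
        congr 1
        rw [Finset.sum_Ico_eq_sum_range]
        simp only [Nat.add_sub_cancel_left]
        rw [hDdef]
        refine Finset.sum_congr rfl fun i _ => ?_
        congr 2
        ring
      have hk' : 2^t * u ≤ 2^m :=
        le_trans (Nat.mul_le_mul_left _ (by omega)) hk
      have hdvd' : 2^(t+1) ∣ 2^t * u := by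
        obtain ⟨v, hv⟩ := hq_odd
        have hu : u = 2*v := by omega
        rw [hu, pow_succ]
        exact ⟨v, by ring⟩
      have hlt' : 2^t * u < 2^t * (u+1) := by
        have heq : 2^t*(u+1) = 2^t*u + 2^t := by ring
        linarith
      have hrec := ih (2^t*u) hlt' (t+1) hdvd' hk'
      have hD := hblk t u htm hjlt
      calc ‖Tres Q g (2^t*(u+1)) x‖
          ≤ ‖Tres Q g (2^t*u) x‖ + ‖Df t u x‖ := by
            rw [hsplit]; exact norm_add_le _ _
        _ ≤ (∑ i ∈ Finset.Ico (t+1) (m+1), thr m i) + thr m t := add_le_add hrec hD.le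
        _ = ∑ i ∈ Finset.Ico t (m+1), thr m i := by
            rw [Finset.sum_eq_sum_Ico_succ_bot (show t < m+1 by omega)]
            ring
        _ ≤ ∑ i ∈ Finset.Ico l₀ (m+1), thr m i :=
            Finset.sum_le_sum_of_subset_of_nonneg
              (Finset.Ico_subset_Ico hl₀t le_rfl) (fun i _ _ => (hthr0 m i).le)
  intro k hk
  refine (chain k 0 (one_dvd _) hk).trans ?_
  have hterm : ∀ i, thr m i = ρ^(m-i) * (ε * (2:ℝ)^((m:ℝ)/2)) := by
    intro i; rw [hthrdef]; ring
  have hrefl : ∑ i ∈ Finset.range (m+1), ρ^(m-i) = ∑ i ∈ Finset.range (m+1), ρ^i := by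
    have := Finset.sum_range_reflect (fun i => ρ^i) (m+1)
    simpa using this
  have hgeom : ∑ i ∈ Finset.range (m+1), ρ^i ≤ (1-ρ)⁻¹ := by
    rw [← tsum_geometric_of_lt_one hρ0.le hρ1]
    exact Summable.sum_le_tsum _ (fun i _ => by positivity)
      (summable_geometric_of_lt_one hρ0.le hρ1)
  calc ∑ i ∈ Finset.Ico 0 (m+1), thr m i
      = ∑ i ∈ Finset.range (m+1), (ρ^(m-i) * (ε * (2:ℝ)^((m:ℝ)/2))) := by
        rw [← Finset.range_eq_Ico]
        exact Finset.sum_congr rfl fun i _ => hterm i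
    _ = (∑ i ∈ Finset.range (m+1), ρ^(m-i)) * (ε * (2:ℝ)^((m:ℝ)/2)) := by
        rw [← Finset.sum_mul]
    _ ≤ (1-ρ)⁻¹ * (ε * (2:ℝ)^((m:ℝ)/2)) := by
        refine mul_le_mul_of_nonneg_right ?_ (by positivity)
        rw [hrefl]; exact hgeom
    _ = ε * (1-ρ)⁻¹ * (2:ℝ)^((m:ℝ)/2) := by ring

end Master


set_option maxHeartbeats 1000000

/-- if `g ∈ L^p(π)` for some `p > 2`, `∫ g dπ = 0`, and
`‖T_n(g,Q)‖₂ ≤ C n^α` for all `n ≥ 1` with some `α ∈ (0, 1/2)`, then for `π`-a.e. `x`,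
`n^{-1/2} max_{1 ≤ k ≤ n} |T_k(g,Q)(x)| → 0` as `n → ∞`. -/
theorem stmt2 {𝒳 : Type*} [MeasurableSpace 𝒳] (d : ℕ)
    (Q : Kernel 𝒳 𝒳) [IsMarkovKernel Q]
    (π : Measure 𝒳) [IsProbabilityMeasure π] (hinv : Kernel.Invariant Q π)
    (g : 𝒳 → EuclideanSpace ℝ (Fin d)) (hgm : StronglyMeasurable g)
    (p α C : ℝ) (hp : 2 < p) (hα0 : 0 < α) (hα : α < 1 / 2)
    (hg : MemLp g (ENNReal.ofReal p) π) (hmean : ∫ x, g x ∂π = 0)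
    (hC : ∀ n : ℕ, 1 ≤ n →
      eLpNorm (Tres Q g n) 2 π ≤ ENNReal.ofReal (C * (n : ℝ) ^ α)) :
    ∀ᵐ x ∂π, Tendsto
      (fun n : ℕ => (n : ℝ) ^ (-(1 : ℝ) / 2) *
        (((Finset.Icc 1 n).sup fun k => ‖Tres Q g k x‖₊ : ℝ≥0) : ℝ))
      atTop (nhds 0) := by

  classical
  have hp0 : (0:ℝ) < p := by linarith
  have hs0 : (0:ℝ) < 1/2 - 1/p := by
    have h1p : 1/p < 1/2 := by
      rw [div_lt_div_iff₀ hp0 (by norm_num : (0:ℝ) < 2)]; linarith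
    linarith
  have hη0 : (0:ℝ) < (1/2 - 1/p) * (1 - 2*α) / 8 := by
    have : (0:ℝ) < 1 - 2*α := by linarith
    positivity
  have hρ1 : (2:ℝ)^(-((1/2 - 1/p) * (1 - 2*α) / 8)) < 1 :=
    Real.rpow_lt_one_of_one_lt_of_neg one_lt_two (by linarith)
  have hρ0 : (0:ℝ) < (2:ℝ)^(-((1/2 - 1/p) * (1 - 2*α) / 8)) :=
    Real.rpow_pos_of_pos (by norm_num) _
  set K : ℝ := (1 - (2:ℝ)^(-((1/2 - 1/p) * (1 - 2*α) / 8)))⁻¹ with hKdef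
  have hK0 : 0 < K := by rw [hKdef]; exact inv_pos.2 (by linarith)
  have combined : ∀ᵐ x ∂π, ∀ r : ℕ, ∀ᶠ m : ℕ in atTop, ∀ k ≤ 2^m,
      ‖Tres Q g k x‖ ≤ (1/((r:ℝ)+1)) * K * (2:ℝ)^((m:ℝ)/2) := by
    rw [ae_all_iff]
    intro r
    exact master hinv hgm hp hα0 hα hg hC (ε := 1/((r:ℝ)+1)) (by positivity)
  filter_upwards [combined] with x hx
  rw [Metric.tendsto_atTop]
  intro δ hδ
  obtain ⟨r, hr⟩ := exists_nat_gt (Real.sqrt 2 * K / δ)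
  have hrK : Real.sqrt 2 * K * (1/((r:ℝ)+1)) < δ := by
    have h1 : Real.sqrt 2 * K / δ < (r:ℝ)+1 := hr.trans (lt_add_one _)
    have h2 : Real.sqrt 2 * K < ((r:ℝ)+1) * δ := (div_lt_iff₀ hδ).1 h1
    rw [mul_one_div, div_lt_iff₀ (by positivity : (0:ℝ) < (r:ℝ)+1)]
    linarith
  obtain ⟨M, hM⟩ := eventually_atTop.1 (hx r)
  refine ⟨2^M, fun n hn => ?_⟩
  have hn1 : 1 ≤ n := le_trans Nat.one_le_two_pow hn
  have hn0 : (0:ℝ) < (n:ℝ) := by exact_mod_cast hn1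
  set m : ℕ := Nat.log 2 n + 1 with hmdef
  have hmM : M ≤ m := by
    have := (Nat.le_log_iff_pow_le (by omega) (by omega)).2 hn
    omega
  have hnm : n < 2^m := Nat.lt_pow_succ_log_self (by omega) n
  have h2m : 2^m ≤ 2*n := by
    have hps := Nat.pow_log_le_self 2 (show n ≠ 0 by omega)
    rw [hmdef, pow_succ]
    omega
  have hbound := hM m hmM
  set b : ℝ := (1/((r:ℝ)+1)) * K * (2:ℝ)^((m:ℝ)/2) with hbdef
  have hb0 : (0:ℝ) ≤ b := by
    rw [hbdef]
    have : (0:ℝ) ≤ (2:ℝ)^((m:ℝ)/2) := (Real.rpow_pos_of_pos (by norm_num) _).le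
    positivity
  have hsup : (((Finset.Icc 1 n).sup fun k => ‖Tres Q g k x‖₊ : ℝ≥0) : ℝ) ≤ b := by
    rw [← Real.coe_toNNReal b hb0, NNReal.coe_le_coe]
    refine Finset.sup_le fun k hk => ?_
    have hkn : k ≤ 2^m := le_trans (Finset.mem_Icc.1 hk).2 hnm.le
    rw [← NNReal.coe_le_coe, Real.coe_toNNReal _ hb0, coe_nnnorm]
    exact hbound k hkn
  have hpow : (2:ℝ)^((m:ℝ)/2) ≤ Real.sqrt 2 * (n:ℝ)^((1:ℝ)/2) := by
    have e1 : (2:ℝ)^((m:ℝ)/2) = (((2^m : ℕ):ℝ))^((1:ℝ)/2) := by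
      rw [show ((2^m : ℕ):ℝ) = (2:ℝ)^((m:ℕ):ℝ) from by
        rw [Nat.cast_pow, Nat.cast_ofNat, Real.rpow_natCast],
        ← Real.rpow_mul (by norm_num : (0:ℝ) ≤ 2)]
      congr 1
      ring
    have e2 : (((2^m : ℕ):ℝ))^((1:ℝ)/2) ≤ (2*(n:ℝ))^((1:ℝ)/2) := by
      refine Real.rpow_le_rpow (by positivity) ?_ (by norm_num)
      exact_mod_cast h2m
    have e3 : (2*(n:ℝ))^((1:ℝ)/2) = Real.sqrt 2 * (n:ℝ)^((1:ℝ)/2) := by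
      rw [Real.mul_rpow (by norm_num) hn0.le, Real.sqrt_eq_rpow]
    rw [e1, ← e3]
    exact e2
  have hnonneg : (0:ℝ) ≤ (n:ℝ)^(-(1:ℝ)/2) *
      (((Finset.Icc 1 n).sup fun k => ‖Tres Q g k x‖₊ : ℝ≥0) : ℝ) :=
    mul_nonneg (Real.rpow_nonneg hn0.le _) (NNReal.coe_nonneg _)
  rw [Real.dist_eq, sub_zero, abs_of_nonneg hnonneg]
  have hr0 : (0:ℝ) ≤ (n:ℝ)^(-(1:ℝ)/2) := Real.rpow_nonneg hn0.le _
  calc (n:ℝ)^(-(1:ℝ)/2) *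
        (((Finset.Icc 1 n).sup fun k => ‖Tres Q g k x‖₊ : ℝ≥0) : ℝ)
      ≤ (n:ℝ)^(-(1:ℝ)/2) * b := mul_le_mul_of_nonneg_left hsup hr0
    _ ≤ (n:ℝ)^(-(1:ℝ)/2) * ((1/((r:ℝ)+1)) * K * (Real.sqrt 2 * (n:ℝ)^((1:ℝ)/2))) := by
        refine mul_le_mul_of_nonneg_left ?_ hr0
        rw [hbdef]
        refine mul_le_mul_of_nonneg_left hpow ?_
        positivity
    _ = Real.sqrt 2 * K * (1/((r:ℝ)+1)) * ((n:ℝ)^(-(1:ℝ)/2) * (n:ℝ)^((1:ℝ)/2)) := by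
        ring
    _ = Real.sqrt 2 * K * (1/((r:ℝ)+1)) := by
        rw [← Real.rpow_add hn0]
        norm_num
    _ < δ := hrK
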